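/- Let λ be a regular cardinal and suppose there is no tower of length δ for any ordinal δ < λ (equivalently, every ⊆*-decreasing sequence of infinite subsets of ℕ of length < λ has an infinite pseudo-intersection). Then every maximal branch through any distributivity matrix of height λ is cofinal. -/

import Mathlib

/-- `b ⊆* a`: `b \ a` is finite. -/
def AlmostSubset (b a : Set ℕ) : Prop := (b \ a).Finite

/-- A mad family on ℕ: a maximal almost disjoint family of infinite subsets of ℕ. -/
def IsMadFamily (A : Set (Set ℕ)) : Prop :=
  (∀ a ∈ A, a.Infinite) ∧
  (A.Pairwise fun a a' => (a ∩ a').Finite) ∧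
  (∀ b : Set ℕ, b.Infinite → ∃ a ∈ A, (b ∩ a).Infinite)

/-- `B` refines `A`: every element of `B` is almost included in some element of `A`. -/
def Refines (B A : Set (Set ℕ)) : Prop := ∀ b ∈ B, ∃ a ∈ A, AlmostSubset b a

/-- A distributivity matrix of height `lam`: a refining system of mad families
indexed by the ordinals below `lam`, without common (mad) refinement. -/
def IsDistribMatrix (lam : Ordinal) (A : Ordinal → Set (Set ℕ)) : Prop :=
  (∀ ξ < lam, IsMadFamily (A ξ)) ∧
  (∀ ξ η : Ordinal, ξ ≤ η → η < lam → Refines (A η) (A ξ)) ∧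
  ¬ ∃ B : Set (Set ℕ), IsMadFamily B ∧ ∀ ξ < lam, Refines B (A ξ)


/-- A tower of length `δ`: a `⊆*`-decreasing sequence of infinite subsets of ℕ
indexed by the ordinals below `δ`, with no infinite pseudo-intersection. -/
def IsTower (δ : Ordinal) (a : Ordinal → Set ℕ) : Prop :=
  (∀ ξ < δ, (a ξ).Infinite) ∧
  (∀ ξ η : Ordinal, ξ ≤ η → η < δ → AlmostSubset (a η) (a ξ)) ∧
  ¬ ∃ b : Set ℕ, b.Infinite ∧ ∀ ξ < δ, AlmostSubset b (a ξ)

/-- A branch of length `δ ≤ lam` through the matrix `{A ξ : ξ < lam}`: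
a `⊆*`-decreasing sequence with `a ξ ∈ A ξ` for all `ξ < δ`. -/
def IsBranch (lam : Ordinal) (A : Ordinal → Set (Set ℕ))
    (δ : Ordinal) (a : Ordinal → Set ℕ) : Prop :=
  δ ≤ lam ∧ (∀ ξ < δ, a ξ ∈ A ξ) ∧
  ∀ ξ η : Ordinal, ξ ≤ η → η < δ → AlmostSubset (a η) (a ξ)

/-- A maximal branch: a branch which no strictly longer branch extends. -/
def IsMaximalBranch (lam : Ordinal) (A : Ordinal → Set (Set ℕ))
    (δ : Ordinal) (a : Ordinal → Set ℕ) : Prop :=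
  IsBranch lam A δ a ∧
  ¬ ∃ (δ' : Ordinal) (a' : Ordinal → Set ℕ), δ < δ' ∧ IsBranch lam A δ' a' ∧
    ∀ ξ < δ, a' ξ = a ξ


theorem maximalBranch_cofinal_of_no_short_towers (lam : Cardinal)
    (hreg : lam.IsRegular)
    (hnotower : ∀ δ < lam.ord, ¬ ∃ a : Ordinal → Set ℕ, IsTower δ a) :
    ∀ (A : Ordinal → Set (Set ℕ)) (δ : Ordinal) (a : Ordinal → Set ℕ),
      IsDistribMatrix lam.ord A → IsMaximalBranch lam.ord A δ a → δ = lam.ord := by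
  intro A δ a hmat hmax
  obtain ⟨⟨hδle, hmem, hdec⟩, hnotext⟩ := hmax
  obtain ⟨hmad, href, -⟩ := hmat
  rcases lt_or_eq_of_le hδle with hδlt | h
  · exfalso
    -- get a pseudo-intersection b
    have hb : ∃ b : Set ℕ, b.Infinite ∧ ∀ ξ < δ, AlmostSubset b (a ξ) := by
      by_contra hb
      exact hnotower δ hδlt ⟨a,
        fun ξ hξ => (hmad ξ (hξ.trans hδlt)).1 _ (hmem ξ hξ), hdec, hb⟩
    obtain ⟨b, hbinf, hbps⟩ := hb
    -- find c ∈ A δ with b ∩ c infinite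
    obtain ⟨c, hcA, hbc⟩ := (hmad δ hδlt).2.2 b hbinf
    -- c ⊆* a ξ for all ξ < δ
    have hkey : ∀ ξ < δ, AlmostSubset c (a ξ) := by
      intro ξ hξ
      obtain ⟨x, hxA, hcx⟩ := href ξ δ hξ.le hδlt c hcA
      have hx : x = a ξ := by
        by_contra hne
        have hfin : (x ∩ a ξ).Finite :=
          (hmad ξ (hξ.trans hδlt)).2.1 hxA (hmem ξ hξ) hne
        have hsub : b ∩ c ⊆ (b \ a ξ) ∪ (c \ x) ∪ (x ∩ a ξ) := by
          intro n hn
          by_cases h1 : n ∈ a ξ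
          · by_cases h2 : n ∈ x
            · exact Or.inr ⟨h2, h1⟩
            · exact Or.inl (Or.inr ⟨hn.2, h2⟩)
          · exact Or.inl (Or.inl ⟨hn.1, h1⟩)
        exact hbc (((((hbps ξ hξ).union hcx).union hfin)).subset hsub)
      rw [← hx]; exact hcx
    -- extend the branch to length δ + 1
    have hlim := Cardinal.isSuccLimit_ord hreg.aleph0_le
    have hδ1 : δ + 1 ≤ lam.ord := hlim.succ_lt hδlt |>.le
    refine hnotext ⟨δ + 1, fun ξ => if ξ < δ then a ξ else c,
      Order.lt_succ δ, ⟨hδ1, ?_, ?_⟩, ?_⟩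
    · intro ξ hξ
      rcases lt_or_eq_of_le (Order.lt_succ_iff.mp hξ) with h | h
      · simp [h, hmem ξ h]
      · simp [h, hcA]
    · intro ξ η hξη hη
      rcases lt_or_eq_of_le (Order.lt_succ_iff.mp hη) with h | h
      · simp only [if_pos h, if_pos (lt_of_le_of_lt hξη h)]
        exact hdec ξ η hξη h
      · subst h
        rcases lt_or_eq_of_le hξη with h | h
        · simp only [if_pos h, if_neg (lt_irrefl η)]
          exact hkey ξ h
        · subst h
          simp only [if_neg (lt_irrefl ξ)]
          simp [AlmostSubset]
    · intro ξ hξ; simp [hξ]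
  · exact h
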